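/- For every real β with −1/3 < β < 0 there exists ε₀ > 0 such that for all ε with 0 < ε < ε₀, setting α := −β, the ε-modified λ-slopes satisfy both λ^ε_{α,β}(1,1,1/2,1/6) > λ^ε_{α,β}(1,−1,1/2,−1/6) and λ^ε_{α,β}(1,1,1/2,1/6) > λ^ε_{α,β}(3,−2,0,2/3); explicitly, −β/3 + 1/3 + 2ε(β−1)/(1−2β) > −β/3 − 1/3 + 2ε(β+1)/(2β+1), and −β/3 + 1/3 + 2ε(β−1)/(1−2β) > (1−β²)/(3β) + ε(3β+2)/(2β). (These are the comparisons λ(O(1)) > λ(O(−1)) and λ(O(1)) > λ(Q) on the region V₃ where α = −β.) -/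

import Mathlib

set_option maxHeartbeats 800000

/-- The `ε`-modified second-tilt slope `λ^ε_{α,β}` of a Chern vector
`(r, c₁, c₂, c₃)` on `P³` (`H³ = 1`). -/
noncomputable def tiltLambdaEps (α β ε r c₁ c₂ c₃ : ℝ) : ℝ :=
  ((c₃ - β * c₂ + (β ^ 2 / 2) * c₁ - (β ^ 3 / 6) * r)
      - (α ^ 2 / 6) * (c₁ - β * r) - ε * (c₁ - β * r)) /
    (c₂ - β * c₁ + (β ^ 2 / 2) * r - (α ^ 2 / 2) * r)

/-- For every `−1/3 < β < 0` there is `ε₀ > 0` such that for all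
`0 < ε < ε₀`, taking `α := −β`, the `ε`-modified slopes satisfy
`λ^ε(O(1)) > λ^ε(O(−1))` and `λ^ε(O(1)) > λ^ε(Q)`; explicitly
`−β/3 + 1/3 + 2ε(β−1)/(1−2β) > −β/3 − 1/3 + 2ε(β+1)/(2β+1)` and
`−β/3 + 1/3 + 2ε(β−1)/(1−2β) > (1−β²)/(3β) + ε(3β+2)/(2β)`. -/
theorem lambda_eps_comparisons_on_V3 (β : ℝ) (h1 : -1/3 < β) (h2 : β < 0) :
    ∃ ε₀ > 0, ∀ ε : ℝ, 0 < ε → ε < ε₀ →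
      tiltLambdaEps (-β) β ε 1 1 (1/2) (1/6)
          > tiltLambdaEps (-β) β ε 1 (-1) (1/2) (-1/6) ∧
      tiltLambdaEps (-β) β ε 1 1 (1/2) (1/6)
          > tiltLambdaEps (-β) β ε 3 (-2) 0 (2/3) ∧
      (-β / 3 + 1/3 + 2 * ε * (β - 1) / (1 - 2 * β)
          > -β / 3 - 1/3 + 2 * ε * (β + 1) / (2 * β + 1)) ∧
      (-β / 3 + 1/3 + 2 * ε * (β - 1) / (1 - 2 * β)
          > (1 - β ^ 2) / (3 * β) + ε * (3 * β + 2) / (2 * β)) := by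
  have hd1 : (0:ℝ) < 1 - 2 * β := by linarith
  have hd2 : (0:ℝ) < 2 * β + 1 := by linarith
  have hβ : β ≠ 0 := ne_of_lt h2
  have hb2 : β^2 < 1/9 := by nlinarith
  refine ⟨5/54, by norm_num, fun ε hε hε' => ?_⟩
  -- explicit formulas for the three slopes
  have e1 : tiltLambdaEps (-β) β ε 1 1 (1/2) (1/6)
      = -β/3 + 1/3 + 2*ε*(β-1)/(1-2*β) := by
    unfold tiltLambdaEps
    rw [div_eq_iff (by intro hc; nlinarith : (1/2 - β*1 + (β^2/2)*1 - ((-β)^2/2)*1) ≠ 0)]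
    field_simp [(show (1 - β*2 : ℝ) ≠ 0 by linarith)]
    ring
  have e2 : tiltLambdaEps (-β) β ε 1 (-1) (1/2) (-1/6)
      = -β/3 - 1/3 + 2*ε*(β+1)/(2*β+1) := by
    unfold tiltLambdaEps
    rw [div_eq_iff (by intro hc; nlinarith : (1/2 - β*(-1) + (β^2/2)*1 - ((-β)^2/2)*1) ≠ 0)]
    field_simp [(show (β*2 + 1 : ℝ) ≠ 0 by linarith)]
    ring
  have e3 : tiltLambdaEps (-β) β ε 3 (-2) 0 (2/3)
      = (1 - β^2)/(3*β) + ε*(3*β+2)/(2*β) := by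
    unfold tiltLambdaEps
    rw [div_eq_iff (by intro hc; nlinarith : (0 - β*(-2) + (β^2/2)*3 - ((-β)^2/2)*3) ≠ 0)]
    field_simp
    ring
  -- the two explicit inequalities
  have key1 : -β / 3 + 1/3 + 2 * ε * (β - 1) / (1 - 2 * β)
      > -β / 3 - 1/3 + 2 * ε * (β + 1) / (2 * β + 1) := by
    rw [gt_iff_lt, ← sub_pos]
    have heq : -β / 3 + 1/3 + 2 * ε * (β - 1) / (1 - 2 * β)
        - (-β / 3 - 1/3 + 2 * ε * (β + 1) / (2 * β + 1))
        = (2*(1 - 4*β^2)/3 - 2*ε*(2 - 4*β^2)) / ((1 - 2*β) * (2*β + 1)) := by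
      field_simp [(show (1 - β*2 : ℝ) ≠ 0 by linarith), (show (β*2 + 1 : ℝ) ≠ 0 by linarith)]
      ring
    rw [heq]
    apply div_pos _ (mul_pos hd1 hd2)
    nlinarith [mul_lt_mul_of_pos_right hε' (show (0:ℝ) < 2 - 4*β^2 by nlinarith)]
  have key2 : -β / 3 + 1/3 + 2 * ε * (β - 1) / (1 - 2 * β)
      > (1 - β ^ 2) / (3 * β) + ε * (3 * β + 2) / (2 * β) := by
    rw [gt_iff_lt, ← sub_pos]
    have hD : (0:ℝ) < 6 * β * (2*β - 1) := by nlinarith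
    have heq : -β / 3 + 1/3 + 2 * ε * (β - 1) / (1 - 2 * β)
        - ((1 - β ^ 2) / (3 * β) + ε * (3 * β + 2) / (2 * β))
        = (2*(β-1)*(2*β-1) - 12*ε*β*(β-1) - 3*ε*(3*β+2)*(2*β-1))
            / (6 * β * (2*β - 1)) := by
      field_simp [(show (1 - β*2 : ℝ) ≠ 0 by linarith), (show (β*2 - 1 : ℝ) ≠ 0 by linarith)]
      ring
    rw [heq]
    apply div_pos _ hD
    nlinarith [mul_pos (mul_pos hε (show (0:ℝ) < 3*β + 2 by linarith)) hd1,
      mul_lt_mul_of_pos_left (show β^2 - β < 4/9 by nlinarith) hε,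
      sq_nonneg β, mul_pos hε hε]
  exact ⟨by rw [e1, e2]; exact key1, by rw [e1, e3]; exact key2, key1, key2⟩
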